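/- For every a, b ∈ ℝ and 1 < p ≤ 2, there exists c with min{a,b} ≤ c ≤ max{a,b} such that |a|^p + |b|^p − 2|(a+b)/2|^p = (1/4)(b−a)^2 p(p−1)|c|^{p−2}. -/

import Mathlib

open Real Set Filter Topology
variable {p : ℝ}


lemma myabs_mul (hp1 : 1 < p) (y : ℝ) : |y| * |y| ^ (p - 2) = |y| ^ (p - 1) := by
  rcases eq_or_ne y 0 with rfl | hy
  · simp [Real.zero_rpow (by linarith : p - 1 ≠ 0)]
  · have h : (0:ℝ) < |y| := abs_pos.mpr hy
    rw [show p - 1 = 1 + (p - 2) by ring, Real.rpow_add h, Real.rpow_one]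

lemma myD2 (hp1 : 1 < p) {x : ℝ} (hx : x ≠ 0) :
    HasDerivAt (fun y : ℝ => p * |y| ^ (p - 2) * y) (p * (p - 1) * |x| ^ (p - 2)) x := by
  rcases hx.lt_or_gt with hx | hx
  · have h1 : HasDerivAt (fun y : ℝ => (-y) ^ (p - 1)) ((p - 1) * (-x) ^ (p - 2) * (-1)) x := by
      have := (Real.hasDerivAt_rpow_const (x := -x) (p := p - 1) (Or.inl (by linarith))).comp x
        (hasDerivAt_neg x)
      simpa [Function.comp_def, show p - 1 - 1 = p - 2 by ring] using this
    have h2 := h1.const_mul (-p)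
    have he : (fun y : ℝ => p * |y| ^ (p - 2) * y) =ᶠ[nhds x] fun y : ℝ => -p * (-y) ^ (p - 1) := by
      filter_upwards [Iio_mem_nhds hx] with y hy
      have hy0 : y < 0 := hy
      have hy' : (0:ℝ) < -y := by linarith
      rw [abs_of_neg hy, show p - 1 = 1 + (p - 2) by ring, Real.rpow_add hy', Real.rpow_one]
      ring
    have heq : p * (p - 1) * |x| ^ (p - 2) = -p * ((p - 1) * (-x) ^ (p - 2) * (-1)) := by
      rw [abs_of_neg hx]; ring
    rw [heq]
    exact h2.congr_of_eventuallyEq he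
  · have h1 : HasDerivAt (fun y : ℝ => y ^ (p - 1)) ((p - 1) * x ^ (p - 2)) x := by
      have := Real.hasDerivAt_rpow_const (x := x) (p := p - 1) (Or.inl (by linarith))
      simpa [show p - 1 - 1 = p - 2 by ring] using this
    have h2 := h1.const_mul p
    have he : (fun y : ℝ => p * |y| ^ (p - 2) * y) =ᶠ[nhds x] fun y : ℝ => p * y ^ (p - 1) := by
      filter_upwards [Ioi_mem_nhds hx] with y hy
      rw [abs_of_pos hy, show p - 1 = 1 + (p - 2) by ring, Real.rpow_add hy, Real.rpow_one]
      ring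
    have heq : p * (p - 1) * |x| ^ (p - 2) = p * ((p - 1) * x ^ (p - 2)) := by
      rw [abs_of_pos hx]; ring
    rw [heq]
    exact h2.congr_of_eventuallyEq he

lemma mytendsto (hp1 : 1 < p) : Tendsto (fun y : ℝ => |y| ^ (p - 1)) (nhds 0) (nhds 0) := by
  have h : ContinuousAt (fun t : ℝ => t ^ (p - 1)) 0 :=
    Real.continuousAt_rpow_const 0 (p - 1) (Or.inr (by linarith))
  have habs : Tendsto (fun y : ℝ => |y|) (nhds 0) (nhds 0) := by
    simpa using (continuous_abs.tendsto (0:ℝ))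
  have := (h.tendsto).comp habs
  simpa [Function.comp_def, Real.zero_rpow (by linarith : p - 1 ≠ 0)] using this

lemma contD (hp1 : 1 < p) : Continuous (fun y : ℝ => p * |y| ^ (p - 2) * y) := by
  rw [continuous_iff_continuousAt]
  intro x
  rcases eq_or_ne x 0 with rfl | hx
  · have hb : ∀ y : ℝ, ‖p * |y| ^ (p - 2) * y‖ ≤ p * |y| ^ (p - 1) := by
      intro y
      rw [norm_mul, norm_mul, Real.norm_eq_abs, Real.norm_eq_abs, Real.norm_eq_abs,
        abs_of_pos (by linarith : (0:ℝ) < p), Real.abs_rpow_of_nonneg (abs_nonneg y), abs_abs,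
        ← myabs_mul hp1 y]
      ring_nf
      exact le_refl _
    have ht : Tendsto (fun y : ℝ => p * |y| ^ (p - 1)) (nhds 0) (nhds 0) := by
      simpa using (mytendsto hp1).const_mul p
    have h0 := squeeze_zero_norm hb ht
    unfold ContinuousAt
    simpa using h0
  · exact (myD2 hp1 hx).continuousAt


lemma contG (hp1 : 1 < p) {s : Set ℝ} (hs : ∀ x ∈ s, x ≠ 0) :
    ContinuousOn (fun x : ℝ => p * (p - 1) * |x| ^ (p - 2)) s := by
  intro x hx
  have h : ContinuousAt (fun x : ℝ => |x| ^ (p - 2)) x :=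
    ContinuousAt.rpow_const continuous_abs.continuousAt (Or.inl (abs_ne_zero.mpr (hs x hx)))
  have h2 : ContinuousAt (fun x : ℝ => p * (p - 1) * |x| ^ (p - 2)) x := h.const_mul _
  exact h2.continuousWithinAt

lemma pos_side (hp1 : 1 < p) (hp2 : p < 2) {v S : ℝ} (hv : 0 < v)
    (hS : p * (p - 1) * v ^ (p - 2) ≤ S) :
    ∃ c, 0 < c ∧ c ≤ v ∧ p * (p - 1) * |c| ^ (p - 2) = S := by
  have hpp : 0 < p * (p - 1) := by nlinarith
  have hSpos : 0 < S := lt_of_lt_of_le (by positivity) hS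
  set B := S / (p * (p - 1)) with hB
  have hBpos : 0 < B := by positivity
  set ε0 : ℝ := B ^ (p - 2)⁻¹ with hε0
  have hε0pos : 0 < ε0 := Real.rpow_pos_of_pos hBpos _
  set ε : ℝ := min v ε0 with hε
  have hεpos : 0 < ε := lt_min hv hε0pos
  have hεv : ε ≤ v := min_le_left _ _
  have hεB : B ≤ ε ^ (p - 2) := by
    have h1 : ε0 ^ (p - 2) ≤ ε ^ (p - 2) :=
      Real.rpow_le_rpow_of_nonpos hεpos (min_le_right _ _) (by linarith)
    have h2 : ε0 ^ (p - 2) = B := by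
      rw [hε0, ← Real.rpow_mul hBpos.le, inv_mul_cancel₀ (by linarith : p - 2 ≠ 0),
        Real.rpow_one]
    linarith
  have hGε : S ≤ p * (p - 1) * ε ^ (p - 2) := by
    have := mul_le_mul_of_nonneg_left hεB hpp.le
    rw [hB] at this
    calc S = p * (p - 1) * (S / (p * (p - 1))) := by field_simp [show p - 1 ≠ 0 by linarith]
    _ ≤ p * (p - 1) * ε ^ (p - 2) := this
  -- IVT on [ε, v], G decreasing-ish: G ε ≥ S ≥ G v
  have hcont : ContinuousOn (fun x : ℝ => p * (p - 1) * |x| ^ (p - 2)) (Icc ε v) :=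
    contG hp1 (fun x hx => ne_of_gt (lt_of_lt_of_le hεpos hx.1))
  have hmem : S ∈ Icc (p * (p - 1) * |v| ^ (p - 2)) (p * (p - 1) * |ε| ^ (p - 2)) := by
    rw [abs_of_pos hv, abs_of_pos hεpos]
    exact ⟨hS, hGε⟩
  have := intermediate_value_Icc' hεv hcont hmem
  obtain ⟨c, hc, hGc⟩ := this
  exact ⟨c, lt_of_lt_of_le hεpos hc.1, hc.2, hGc⟩

lemma key (hp1 : 1 < p) (hp2 : p < 2) {u v : ℝ} (huv : u < v) :
    ∃ c, u ≤ c ∧ c ≤ v ∧ p * (p - 1) * |c| ^ (p - 2)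
      = ((p * |v| ^ (p - 2) * v) - (p * |u| ^ (p - 2) * u)) / (v - u) := by
  set D : ℝ → ℝ := fun y => p * |y| ^ (p - 2) * y with hD
  set S : ℝ := (D v - D u) / (v - u) with hS
  by_cases h0 : 0 ∈ Ioo u v
  · -- hard case : u < 0 < v
    have hu0 : u < 0 := h0.1
    have h0v : 0 < v := h0.2
    have hpp : 0 < p * (p - 1) := by nlinarith
    set M : ℝ := max (-u) v with hM
    have hMpos : 0 < M := lt_of_lt_of_le h0v (le_max_right _ _)
    -- monotone bound : p*(p-1)*M^(p-2) ≤ S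
    set gM : ℝ := p * (p - 1) * M ^ (p - 2) with hgM
    have hgMpos : 0 < gM := by
      have := Real.rpow_pos_of_pos hMpos (p - 2); positivity
    set h : ℝ → ℝ := fun x => D x - gM * x with hh
    have hconth : ContinuousOn h (Icc u v) :=
      ((contD hp1).sub (continuous_const.mul continuous_id)).continuousOn
    have hderiv : ∀ x : ℝ, x ≠ 0 → HasDerivAt h (p * (p - 1) * |x| ^ (p - 2) - gM) x := by
      intro x hx
      exact ((myD2 hp1 hx).sub ((hasDerivAt_id x).const_mul gM)).congr_deriv (by ring)
    have hge : ∀ x : ℝ, x ∈ Icc u v → x ≠ 0 → gM ≤ p * (p - 1) * |x| ^ (p - 2) := by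
      intro x hx hx0
      have habs : |x| ≤ M := by
        rw [abs_le]; constructor
        · have := hx.1; have : -M ≤ u := by
            have := le_max_left (-u) v; rw [hM]; linarith [le_max_left (-u) v]
          linarith [hx.1]
        · exact le_trans hx.2 (le_max_right _ _)
      have := Real.rpow_le_rpow_of_nonpos (abs_pos.mpr hx0) habs (by linarith : p - 2 ≤ 0)
      exact mul_le_mul_of_nonneg_left this hpp.le
    have hmono1 : MonotoneOn h (Icc u 0) := by
      apply monotoneOn_of_deriv_nonneg (convex_Icc u 0) (hconth.mono (Icc_subset_Icc le_rfl h0v.le))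
      · rw [interior_Icc]
        intro x hx
        exact (hderiv x (ne_of_lt hx.2)).differentiableAt.differentiableWithinAt
      · rw [interior_Icc]
        intro x hx
        rw [(hderiv x (ne_of_lt hx.2)).deriv]
        have := hge x ⟨hx.1.le, le_trans hx.2.le h0v.le⟩ (ne_of_lt hx.2)
        linarith
    have hmono2 : MonotoneOn h (Icc 0 v) := by
      apply monotoneOn_of_deriv_nonneg (convex_Icc 0 v) (hconth.mono (Icc_subset_Icc hu0.le le_rfl))
      · rw [interior_Icc]
        intro x hx
        exact (hderiv x (ne_of_gt hx.1)).differentiableAt.differentiableWithinAt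
      · rw [interior_Icc]
        intro x hx
        rw [(hderiv x (ne_of_gt hx.1)).deriv]
        have := hge x ⟨le_trans hu0.le hx.1.le, hx.2.le⟩ (ne_of_gt hx.1)
        linarith
    have hhuv : h u ≤ h v := by
      have h1 : h u ≤ h 0 := hmono1 ⟨le_rfl, hu0.le⟩ ⟨hu0.le, le_rfl⟩ hu0.le
      have h2 : h 0 ≤ h v := hmono2 ⟨le_rfl, h0v.le⟩ ⟨h0v.le, le_rfl⟩ h0v.le
      linarith
    have hgMS : gM ≤ S := by
      rw [hS, le_div_iff₀ (by linarith : (0:ℝ) < v - u)]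
      have : D u - gM * u ≤ D v - gM * v := hhuv
      linarith
    -- now IVT on the side achieving M
    rcases le_or_gt v (-u) with hside | hside
    · -- M = -u, use negative side via pos_side applied to -u
      have hMu : M = -u := max_eq_left hside
      have hS' : p * (p - 1) * (-u) ^ (p - 2) ≤ S := by rw [← hMu]; exact hgMS
      obtain ⟨c', hc'1, hc'2, hc'3⟩ := pos_side hp1 hp2 (by linarith : (0:ℝ) < -u) hS'
      refine ⟨-c', by linarith, by linarith, ?_⟩
      rw [abs_neg]
      exact hc'3
    · have hMv : M = v := max_eq_right hside.le
      have hS' : p * (p - 1) * v ^ (p - 2) ≤ S := by rw [← hMv]; exact hgMS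
      obtain ⟨c, hc1, hc2, hc3⟩ := pos_side hp1 hp2 h0v hS'
      exact ⟨c, by linarith, hc2, by rw [hc3, hS]⟩
  · -- easy case : 0 ∉ Ioo u v, classical MVT
    have hcont : ContinuousOn D (Icc u v) := (contD hp1).continuousOn
    have hderiv : ∀ x ∈ Ioo u v, HasDerivAt D (p * (p - 1) * |x| ^ (p - 2)) x := by
      intro x hx
      exact myD2 hp1 (fun h => h0 (h ▸ hx))
    obtain ⟨c, hc, hc2⟩ := exists_hasDerivAt_eq_slope D _ huv hcont hderiv
    exact ⟨c, hc.1.le, hc.2.le, by rw [hc2, hS]⟩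
lemma main_le (hp1 : 1 < p) (hp2 : p < 2) {a b : ℝ} (hab : a ≤ b) :
    ∃ c : ℝ, a ≤ c ∧ c ≤ b ∧
      |a| ^ p + |b| ^ p - 2 * |(a + b) / 2| ^ p
        = (1 / 4) * (b - a) ^ 2 * (p * (p - 1)) * |c| ^ (p - 2) := by
  rcases eq_or_lt_of_le hab with rfl | hab
  · exact ⟨a, le_rfl, le_rfl, by rw [show (a + a) / 2 = a by ring]; ring⟩
  set m : ℝ := (a + b) / 2 with hm
  set t : ℝ := (b - a) / 2 with htd
  have ht : 0 < t := by rw [htd]; linarith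
  set K : ℝ := |a| ^ p + |b| ^ p - 2 * |m| ^ p with hK
  have hmt1 : m + t = b := by rw [hm, htd]; ring
  have hmt2 : m - t = a := by rw [hm, htd]; ring
  -- Rolle on φ
  have hd : ∀ x : ℝ, HasDerivAt (fun x : ℝ => |m + x| ^ p + |m - x| ^ p - 2 * |m| ^ p
      - K / t ^ 2 * x ^ 2)
      (p * |m + x| ^ (p - 2) * (m + x) - p * |m - x| ^ (p - 2) * (m - x)
        - K / t ^ 2 * (2 * x)) x := by
    intro x
    have h1 : HasDerivAt (fun y : ℝ => |m + y| ^ p) (p * |m + x| ^ (p - 2) * (m + x) * 1) x :=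
      (hasDerivAt_abs_rpow (m + x) hp1).comp x ((hasDerivAt_id x).const_add m)
    have h2 : HasDerivAt (fun y : ℝ => |m - y| ^ p) (p * |m - x| ^ (p - 2) * (m - x) * (-1)) x :=
      (hasDerivAt_abs_rpow (m - x) hp1).comp x ((hasDerivAt_id x).const_sub m)
    have h3 : HasDerivAt (fun y : ℝ => K / t ^ 2 * y ^ 2) (K / t ^ 2 * (2 * x)) x := by
      simpa using (hasDerivAt_pow 2 x).const_mul (K / t ^ 2)
    have := ((h1.add h2).sub_const (2 * |m| ^ p)).sub h3
    exact this.congr_deriv (by ring)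
  have hcont : ContinuousOn (fun x : ℝ => |m + x| ^ p + |m - x| ^ p - 2 * |m| ^ p
      - K / t ^ 2 * x ^ 2) (Icc 0 t) :=
    fun x _ => (hd x).continuousAt.continuousWithinAt
  have hfI : (fun x : ℝ => |m + x| ^ p + |m - x| ^ p - 2 * |m| ^ p - K / t ^ 2 * x ^ 2) 0
      = (fun x : ℝ => |m + x| ^ p + |m - x| ^ p - 2 * |m| ^ p - K / t ^ 2 * x ^ 2) t := by
    simp only
    rw [hmt1, hmt2, add_zero, sub_zero]
    have h4 : K / t ^ 2 * t ^ 2 = K := by field_simp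
    rw [h4, hK]
    ring
  obtain ⟨ξ, hξ, hξ0⟩ := exists_hasDerivAt_eq_zero ht hcont hfI (fun x _ => hd x)
  have hξpos : 0 < ξ := hξ.1
  have hξt : ξ < t := hξ.2
  -- apply the key slope lemma on [m - ξ, m + ξ]
  obtain ⟨c, hc1, hc2, hc3⟩ := key hp1 hp2 (show m - ξ < m + ξ by linarith)
  have hslope : (p * |m + ξ| ^ (p - 2) * (m + ξ) - p * |m - ξ| ^ (p - 2) * (m - ξ))
      / (m + ξ - (m - ξ)) = K / t ^ 2 := by
    have h5 : p * |m + ξ| ^ (p - 2) * (m + ξ) - p * |m - ξ| ^ (p - 2) * (m - ξ)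
        = K / t ^ 2 * (2 * ξ) := by linarith [hξ0]
    rw [h5, show m + ξ - (m - ξ) = 2 * ξ by ring]
    field_simp
  rw [hslope] at hc3
  refine ⟨c, by linarith, by linarith, ?_⟩
  have ht2 : (1 / 4 : ℝ) * (b - a) ^ 2 = t ^ 2 := by rw [htd]; ring
  calc |a| ^ p + |b| ^ p - 2 * |(a + b) / 2| ^ p = K := by rw [hK, hm]
  _ = t ^ 2 * (K / t ^ 2) := by field_simp
  _ = 1 / 4 * (b - a) ^ 2 * (p * (p - 1)) * |c| ^ (p - 2) := by
      rw [← hc3, ht2]; ring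

/-- For every `a b ∈ ℝ` and `1 < p ≤ 2`, there exists `c` with `min a b ≤ c ≤ max a b`
such that `|a|^p + |b|^p − 2|(a+b)/2|^p = (1/4)(b−a)^2 p(p−1)|c|^(p−2)`. -/
theorem stmt_3 (p : ℝ) (hp1 : 1 < p) (hp2 : p ≤ 2) (a b : ℝ) :
    ∃ c : ℝ, min a b ≤ c ∧ c ≤ max a b ∧
      |a| ^ p + |b| ^ p - 2 * |(a + b) / 2| ^ p
        = (1 / 4) * (b - a) ^ 2 * (p * (p - 1)) * |c| ^ (p - 2) := by
  rcases eq_or_lt_of_le hp2 with rfl | hp2'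
  · -- p = 2
    refine ⟨a, min_le_left a b, le_max_left a b, ?_⟩
    rw [show (2:ℝ) - 2 = 0 by ring, Real.rpow_zero,
      show (2:ℝ) = ((2:ℕ):ℝ) by norm_num]
    rw [Real.rpow_natCast, Real.rpow_natCast, Real.rpow_natCast]
    rw [sq_abs, sq_abs, sq_abs]
    ring
  rcases le_total a b with hab | hab
  · obtain ⟨c, hc1, hc2, hc3⟩ := main_le hp1 hp2' hab
    exact ⟨c, (min_le_left a b).trans hc1, hc2.trans (le_max_right a b), hc3⟩
  · obtain ⟨c, hc1, hc2, hc3⟩ := main_le hp1 hp2' hab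
    refine ⟨c, (min_le_right a b).trans hc1, hc2.trans (le_max_left a b), ?_⟩
    rw [show (a + b) / 2 = (b + a) / 2 by ring, show ((b:ℝ) - a) ^ 2 = (a - b) ^ 2 by ring]
    linarith [hc3]
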